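/- Assume λ + μ² ≠ 0. Let P, Q, R, S be a pqrs-quad that additionally satisfies the B-relations (for every w ∈ ℂ: P(w+iπ) = e^{iℓπ}·(λ+μ²)⁻¹·(μ·e^{2w}·R(w) + S(w)); Q(w+iπ) = −e^{iℓπ}·((μ·e^{2w}·P(w) + Q(w)) + μ·(λ+μ²)⁻¹·e^{2w}·(μ·e^{2w}·R(w) + S(w))); R(w+iπ) = −e^{iℓπ}·R(w); S(w+iπ) = e^{iℓπ}·((λ+μ²)·P(w) + μ·e^{2w}·R(w))), and let F be an entire function with ℋ[F] = 0. Then the square of L_B reduces to a multiple of the monodromy: for every w ∈ ℂ, L_B[L_B[F]](w) = −(λ+μ²)·e^{2iℓπ}·𝔇·F(w+2πi), where 𝔇 = P(0)·S(0) − Q(0)·R(0) is the (constant) value of the first integral. -/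

import Mathlib

noncomputable def ipi : ℂ := (Real.pi : ℂ) * Complex.I

noncomputable def heunOp (ell lam mu : ℂ) (F : ℂ → ℂ) : ℂ → ℂ := fun w =>
  deriv (deriv F) w + (ell + mu * (Complex.exp (-w) - Complex.exp w)) * deriv F w +
    (lam - (ell + 1) * mu * Complex.exp w) * F w

noncomputable def opLB (ell mu : ℂ) (R S : ℂ → ℂ) (F : ℂ → ℂ) : ℂ → ℂ := fun w =>
  Complex.exp ((1 - ell) * w) * Complex.exp (mu * (Complex.exp w + Complex.exp (-w))) *
    (S (w + ipi) * F (w + ipi) - Complex.exp w * R (w + ipi) * deriv F (w + ipi))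

lemma exp_two_mul' (x : ℂ) : Complex.exp (2 * x) = Complex.exp x * Complex.exp x := by
  rw [two_mul, Complex.exp_add]

lemma hasDerivAt_shift (g : ℂ → ℂ) (hg : Differentiable ℂ g) (c x : ℂ) :
    HasDerivAt (fun y => g (y + c)) (deriv g (x + c)) x := by
  simpa [Function.comp_def] using (hg (x + c)).hasDerivAt.comp x ((hasDerivAt_id x).add_const c)

lemma hasDerivAt_opLB (ell mu : ℂ) (R S F : ℂ → ℂ) (hR : Differentiable ℂ R)
    (hS : Differentiable ℂ S) (hF : Differentiable ℂ F) (hF' : Differentiable ℂ (deriv F))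
    (x : ℂ) :
    HasDerivAt (opLB ell mu R S F)
      (Complex.exp ((1 - ell) * x) * Complex.exp (mu * (Complex.exp x + Complex.exp (-x))) *
        (((1 - ell) + mu * (Complex.exp x - Complex.exp (-x))) *
            (S (x + ipi) * F (x + ipi) - Complex.exp x * R (x + ipi) * deriv F (x + ipi)) +
          (deriv S (x + ipi) * F (x + ipi) + S (x + ipi) * deriv F (x + ipi) -
            (Complex.exp x * R (x + ipi) * deriv F (x + ipi) +
             Complex.exp x * deriv R (x + ipi) * deriv F (x + ipi) +
             Complex.exp x * R (x + ipi) * deriv (deriv F) (x + ipi))))) x := by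
  have hid : HasDerivAt (fun y : ℂ => y) 1 x := hasDerivAt_id x
  have hA : HasDerivAt (fun y : ℂ => Complex.exp ((1 - ell) * y))
      (Complex.exp ((1 - ell) * x) * (1 - ell)) x := by
    have h : HasDerivAt (fun y : ℂ => (1 - ell) * y) (1 - ell) x := by
      simpa using hid.const_mul (1 - ell)
    exact h.cexp
  have hexp : HasDerivAt (fun y : ℂ => Complex.exp y) (Complex.exp x) x := by
    simpa using hid.cexp
  have hexpneg : HasDerivAt (fun y : ℂ => Complex.exp (-y)) (-Complex.exp (-x)) x := by
    simpa using hid.neg.cexp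
  have hM : HasDerivAt (fun y : ℂ => Complex.exp (mu * (Complex.exp y + Complex.exp (-y))))
      (Complex.exp (mu * (Complex.exp x + Complex.exp (-x))) *
        (mu * (Complex.exp x - Complex.exp (-x)))) x := by
    have h : HasDerivAt (fun y : ℂ => mu * (Complex.exp y + Complex.exp (-y)))
        (mu * (Complex.exp x - Complex.exp (-x))) x := by
      have := (hexp.add hexpneg).const_mul mu
      simpa [sub_eq_add_neg] using this
    exact h.cexp
  have hT : HasDerivAt
      (fun y => S (y + ipi) * F (y + ipi) - Complex.exp y * R (y + ipi) * deriv F (y + ipi))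
      ((deriv S (x + ipi) * F (x + ipi) + S (x + ipi) * deriv F (x + ipi)) -
        ((Complex.exp x * R (x + ipi) + Complex.exp x * deriv R (x + ipi)) * deriv F (x + ipi) +
          Complex.exp x * R (x + ipi) * deriv (deriv F) (x + ipi))) x :=
    ((hasDerivAt_shift S hS ipi x).mul (hasDerivAt_shift F hF ipi x)).sub
      ((hexp.mul (hasDerivAt_shift R hR ipi x)).mul (hasDerivAt_shift (deriv F) hF' ipi x))
  exact ((hA.mul hM).mul hT).congr_deriv (by simp only [Pi.mul_apply]; ring)

lemma first_integral_const (ell lam mu : ℂ) (P Q R S : ℂ → ℂ)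
    (hP : Differentiable ℂ P) (hQ : Differentiable ℂ Q)
    (hR : Differentiable ℂ R) (hS : Differentiable ℂ S)
    (hsys1 : ∀ w : ℂ, Complex.exp w * deriv P w =
      (mu + (ell - 1) * Complex.exp w) * P w - Q w + Complex.exp (2 * w) * R w)
    (hsys2 : ∀ w : ℂ, deriv Q w =
      Complex.exp w * ((lam - (ell + 1) * mu * Complex.exp w) * P w + mu * Q w + S w))
    (hsys3 : ∀ w : ℂ, Complex.exp w * deriv R w =
      -(lam + mu ^ 2) * P w + Complex.exp w * (2 * (ell - 1) - mu * Complex.exp w) * R w - S w)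
    (hsys4 : ∀ w : ℂ, Complex.exp w * deriv S w =
      -(lam + mu ^ 2) * Q w + Complex.exp (2 * w) * (lam - (ell + 1) * mu * Complex.exp w) * R w
        + ((ell - 1) * Complex.exp w - mu) * S w) :
    ∀ x : ℂ, Complex.exp (2 * (1 - ell) * x) * (P x * S x - Q x * R x) =
      P 0 * S 0 - Q 0 * R 0 := by
  intro x
  set f : ℂ → ℂ := fun y => Complex.exp (2 * (1 - ell) * y) * (P y * S y - Q y * R y) with hfdef
  have hexpdiff : Differentiable ℂ (fun y : ℂ => Complex.exp (2 * (1 - ell) * y)) :=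
    (differentiable_id.const_mul (2 * (1 - ell))).cexp
  have hf : Differentiable ℂ f :=
    hexpdiff.mul ((hP.mul hS).sub (hQ.mul hR))
  have hd : ∀ y : ℂ, deriv f y = 0 := by
    intro y
    have hE : Complex.exp y ≠ 0 := Complex.exp_ne_zero y
    have hA : HasDerivAt (fun z : ℂ => Complex.exp (2 * (1 - ell) * z))
        (Complex.exp (2 * (1 - ell) * y) * (2 * (1 - ell))) y := by
      have h : HasDerivAt (fun z : ℂ => 2 * (1 - ell) * z) (2 * (1 - ell)) y := by
        simpa using (hasDerivAt_id y).const_mul (2 * (1 - ell))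
      exact h.cexp
    have hT : HasDerivAt (fun z : ℂ => P z * S z - Q z * R z)
        ((deriv P y * S y + P y * deriv S y) - (deriv Q y * R y + Q y * deriv R y)) y :=
      (((hP y).hasDerivAt.mul (hS y).hasDerivAt)).sub
        (((hQ y).hasDerivAt.mul (hR y).hasDerivAt))
    have h : deriv (fun z => Complex.exp (2 * (1 - ell) * z) * (P z * S z - Q z * R z)) y = _ :=
      (hA.mul hT).deriv
    rw [hfdef, h]
    have hPd : deriv P y = (Complex.exp y)⁻¹ * ((mu + (ell - 1) * Complex.exp y) * P y - Q y +
        Complex.exp y * Complex.exp y * R y) := by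
      have h1 := hsys1 y
      rw [exp_two_mul'] at h1
      rw [← h1, inv_mul_cancel_left₀ hE]
    have hRd : deriv R y = (Complex.exp y)⁻¹ * (-(lam + mu ^ 2) * P y +
        Complex.exp y * (2 * (ell - 1) - mu * Complex.exp y) * R y - S y) := by
      have h1 := hsys3 y
      rw [← h1, inv_mul_cancel_left₀ hE]
    have hSd : deriv S y = (Complex.exp y)⁻¹ * (-(lam + mu ^ 2) * Q y +
        Complex.exp y * Complex.exp y * (lam - (ell + 1) * mu * Complex.exp y) * R y
        + ((ell - 1) * Complex.exp y - mu) * S y) := by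
      have h1 := hsys4 y
      rw [exp_two_mul'] at h1
      rw [← h1, inv_mul_cancel_left₀ hE]
    rw [hPd, hRd, hSd, hsys2 y]
    field_simp
    ring
  have h0 := is_const_of_deriv_eq_zero hf hd x 0
  simpa [hfdef] using h0

set_option maxHeartbeats 1600000 in
theorem statement_11 (ell lam mu : ℂ) (hne : lam + mu ^ 2 ≠ 0) (P Q R S : ℂ → ℂ)
    (hP : Differentiable ℂ P) (hQ : Differentiable ℂ Q)
    (hR : Differentiable ℂ R) (hS : Differentiable ℂ S)
    (hsys1 : ∀ w : ℂ, Complex.exp w * deriv P w =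
      (mu + (ell - 1) * Complex.exp w) * P w - Q w + Complex.exp (2 * w) * R w)
    (hsys2 : ∀ w : ℂ, deriv Q w =
      Complex.exp w * ((lam - (ell + 1) * mu * Complex.exp w) * P w + mu * Q w + S w))
    (hsys3 : ∀ w : ℂ, Complex.exp w * deriv R w =
      -(lam + mu ^ 2) * P w + Complex.exp w * (2 * (ell - 1) - mu * Complex.exp w) * R w - S w)
    (hsys4 : ∀ w : ℂ, Complex.exp w * deriv S w =
      -(lam + mu ^ 2) * Q w + Complex.exp (2 * w) * (lam - (ell + 1) * mu * Complex.exp w) * R w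
        + ((ell - 1) * Complex.exp w - mu) * S w)
    (hB : ∀ w : ℂ,
      P (w + ipi) = Complex.exp (Complex.I * ell * (Real.pi : ℂ)) * (lam + mu ^ 2)⁻¹ *
        (mu * Complex.exp (2 * w) * R w + S w) ∧
      Q (w + ipi) = -Complex.exp (Complex.I * ell * (Real.pi : ℂ)) *
        ((mu * Complex.exp (2 * w) * P w + Q w) +
          mu * (lam + mu ^ 2)⁻¹ * Complex.exp (2 * w) *
            (mu * Complex.exp (2 * w) * R w + S w)) ∧
      R (w + ipi) = -Complex.exp (Complex.I * ell * (Real.pi : ℂ)) * R w ∧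
      S (w + ipi) = Complex.exp (Complex.I * ell * (Real.pi : ℂ)) * ((lam + mu ^ 2) * P w + mu * Complex.exp (2 * w) * R w))
    (F : ℂ → ℂ) (hF : Differentiable ℂ F) (hF' : Differentiable ℂ (deriv F))
    (hHeun : ∀ w : ℂ, heunOp ell lam mu F w = 0) :
    ∀ w : ℂ,
      opLB ell mu R S (opLB ell mu R S F) w =
        -(lam + mu ^ 2) * Complex.exp (2 * Complex.I * ell * (Real.pi : ℂ)) * (P 0 * S 0 - Q 0 * R 0) * F (w + 2 * ipi) := by
  intro w
  have hE : Complex.exp w ≠ 0 := Complex.exp_ne_zero w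
  have epi : Complex.exp ipi = -1 := Complex.exp_pi_mul_I
  have e1 : Complex.exp (w + ipi) = -Complex.exp w := by
    rw [Complex.exp_add, epi, mul_neg_one]
  have e3 : Complex.exp (w + ipi + ipi) = Complex.exp w := by
    rw [Complex.exp_add, e1, epi]; ring
  have e5 : Complex.exp (2 * (w + ipi)) = Complex.exp w * Complex.exp w := by
    rw [exp_two_mul', e1]; ring
  have e6 : Complex.exp (2 * (w + ipi + ipi)) = Complex.exp w * Complex.exp w := by
    rw [exp_two_mul', e3]
  have e7 : Complex.exp ((1 - ell) * (w + ipi)) =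
      -(Complex.exp ((1 - ell) * w) * (Complex.exp (Complex.I * ell * (Real.pi : ℂ)))⁻¹) := by
    have harg : (1 - ell) * (w + ipi) =
        ((1 - ell) * w + -(Complex.I * ell * (Real.pi : ℂ))) + ipi := by
      simp only [ipi]; ring
    rw [harg, Complex.exp_add, Complex.exp_add, epi, Complex.exp_neg]
    ring
  have e8 : Complex.exp (mu * (-Complex.exp w + (-Complex.exp w)⁻¹)) =
      (Complex.exp (mu * (Complex.exp w + (Complex.exp w)⁻¹)))⁻¹ := by
    rw [← Complex.exp_neg]
    congr 1
    rw [inv_neg]; ring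
  have e9 : Complex.exp (2 * Complex.I * ell * (Real.pi : ℂ)) =
      Complex.exp (Complex.I * ell * (Real.pi : ℂ)) *
        Complex.exp (Complex.I * ell * (Real.pi : ℂ)) := by
    rw [← Complex.exp_add]; congr 1; ring
  have e10 : Complex.exp (2 * (1 - ell) * w) =
      Complex.exp ((1 - ell) * w) * Complex.exp ((1 - ell) * w) := by
    rw [← Complex.exp_add]; congr 1; ring
  obtain ⟨bP1, bQ1, bR1, bS1⟩ := hB w
  obtain ⟨bP2, bQ2, bR2, bS2⟩ := hB (w + ipi)
  have cP2 : P (w + ipi + ipi) =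
      Complex.exp (Complex.I * ell * (Real.pi : ℂ)) *
        Complex.exp (Complex.I * ell * (Real.pi : ℂ)) * P w := by
    rw [bP2, bR1, bS1, e5, exp_two_mul' w]
    field_simp
    ring
  have cQ2 : Q (w + ipi + ipi) =
      Complex.exp (Complex.I * ell * (Real.pi : ℂ)) *
        Complex.exp (Complex.I * ell * (Real.pi : ℂ)) * Q w := by
    rw [bQ2, bP1, bQ1, bR1, bS1, e5, exp_two_mul' w]
    field_simp
    ring
  have cR2 : R (w + ipi + ipi) =
      Complex.exp (Complex.I * ell * (Real.pi : ℂ)) *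
        Complex.exp (Complex.I * ell * (Real.pi : ℂ)) * R w := by
    rw [bR2, bR1]; ring
  have cS2 : S (w + ipi + ipi) =
      Complex.exp (Complex.I * ell * (Real.pi : ℂ)) *
        Complex.exp (Complex.I * ell * (Real.pi : ℂ)) * S w := by
    rw [bS2, bP1, bR1, e5, exp_two_mul' w]
    field_simp
    ring
  have hRd : deriv R (w + ipi + ipi) = (Complex.exp w)⁻¹ *
      (-(lam + mu ^ 2) * P (w + ipi + ipi) +
        Complex.exp w * (2 * (ell - 1) - mu * Complex.exp w) * R (w + ipi + ipi) -
        S (w + ipi + ipi)) := by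
    have h1 := hsys3 (w + ipi + ipi)
    rw [e3] at h1
    rw [← h1, inv_mul_cancel_left₀ hE]
  have hSd : deriv S (w + ipi + ipi) = (Complex.exp w)⁻¹ *
      (-(lam + mu ^ 2) * Q (w + ipi + ipi) +
        Complex.exp w * Complex.exp w * (lam - (ell + 1) * mu * Complex.exp w) *
          R (w + ipi + ipi) +
        ((ell - 1) * Complex.exp w - mu) * S (w + ipi + ipi)) := by
    have h1 := hsys4 (w + ipi + ipi)
    rw [e3, e6] at h1
    rw [← h1, inv_mul_cancel_left₀ hE]
  have hFdd : deriv (deriv F) (w + ipi + ipi) =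
      -((ell + mu * ((Complex.exp w)⁻¹ - Complex.exp w)) * deriv F (w + ipi + ipi)) -
        (lam - (ell + 1) * mu * Complex.exp w) * F (w + ipi + ipi) := by
    have h1 := hHeun (w + ipi + ipi)
    simp only [heunOp] at h1
    rw [e3, Complex.exp_neg, e3] at h1
    linear_combination h1
  have hG := (hasDerivAt_opLB ell mu R S F hR hS hF hF' (w + ipi)).deriv
  have hFI := first_integral_const ell lam mu P Q R S hP hQ hR hS hsys1 hsys2 hsys3 hsys4 w
  rw [show w + 2 * ipi = w + ipi + ipi from by ring]
  simp only [opLB] at hG ⊢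
  rw [hG, hRd, hSd, hFdd, cP2, cQ2, cR2, cS2, bR1, bS1, ← hFI]
  simp only [Complex.exp_neg, e1, e3, e5, e6, e7, e8, e9, e10, exp_two_mul']
  set E := Complex.exp w with hEdef
  set M := Complex.exp (mu * (E + E⁻¹)) with hMdef
  set eb := Complex.exp ((1 - ell) * w) with hebdef
  set eps := Complex.exp (Complex.I * ell * (Real.pi : ℂ)) with hepsdef
  have hEne : E ≠ 0 := by rw [hEdef]; exact Complex.exp_ne_zero w
  have hMne : M ≠ 0 := by rw [hMdef]; exact Complex.exp_ne_zero _
  have hebne : eb ≠ 0 := by rw [hebdef]; exact Complex.exp_ne_zero _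
  have hepsne : eps ≠ 0 := by rw [hepsdef]; exact Complex.exp_ne_zero _
  field_simp [hEne, hMne, hebne, hepsne]
  ring
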